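/- arXiv:2502.06058 — 3 statements merged into one kernel-verified Lean document; each statement's English description precedes it below -/
import Mathlib

section
/- Let C be an [n,k] binary linear code with parity-check matrix H (an (n-k)×n matrix over F_2 whose kernel is C, with rank n-k). Let X' be uniform on C and V an independent random vector in F_2^n. Then the KL divergence D(P_{X'+V} || U_{F_2^n}) equals D(P_{HV} || U_{F_2^{n-k}}), where U_S denotes the uniform distribution on S. -/
/-- KL divergence between two distributions on a finite set. -/
noncomputable def KLdiv {α : Type*} [Fintype α] (P Q : α → ℝ) : ℝ :=
  ∑ x, P x * Real.logb 2 (P x / Q x)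

/-- For an `[n,k]` binary linear code `C = ker H` with full-rank parity-check matrix `H`,
`X'` uniform on `C` and `V` independent noise,
`D(P_{X'+V} ‖ U_{F_2^n}) = D(P_{HV} ‖ U_{F_2^{n-k}})`. -/
theorem stmt_2 (n k : ℕ) (hk : k ≤ n)
    (H : Matrix (Fin (n - k)) (Fin n) (ZMod 2))
    (hrank : Function.Surjective H.mulVec)
    (hdim : Fintype.card {c : Fin n → ZMod 2 // H.mulVec c = 0} = 2 ^ k)
    (pV : (Fin n → ZMod 2) → ℝ) (hV0 : ∀ v, 0 ≤ pV v) (hV1 : ∑ v, pV v = 1) :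
    KLdiv (fun v => ∑ c : {c : Fin n → ZMod 2 // H.mulVec c = 0},
        (1 / (2 ^ k : ℝ)) * pV (v - c.1))
      (fun _ => (1 : ℝ) / 2 ^ n)
      = KLdiv (fun u => ∑ v, if H.mulVec v = u then pV v else 0)
        (fun _ => (1 : ℝ) / 2 ^ (n - k)) := by
  classical
  have hpow : (2:ℝ)^n = 2^(n-k) * 2^k := by
    rw [← pow_add]; congr 1; omega
  set q : (Fin (n-k) → ZMod 2) → ℝ := fun u => ∑ v, if H.mulVec v = u then pV v else 0 with hq
  have key : ∀ v : Fin n → ZMod 2,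
      (∑ c : {c : Fin n → ZMod 2 // H.mulVec c = 0}, (1/(2^k:ℝ)) * pV (v - c.1))
        = (1/(2^k:ℝ)) * q (H.mulVec v) := by
    intro v
    rw [← Finset.mul_sum]
    congr 1
    rw [Fintype.sum_equiv
      (⟨fun c => ⟨v - c.1, by rw [Matrix.mulVec_sub, c.2, sub_zero]⟩,
        fun w => ⟨v - w.1, by rw [Matrix.mulVec_sub, w.2, sub_self]⟩,
        fun c => by ext1; simp, fun w => by ext1; simp⟩ :
        {c : Fin n → ZMod 2 // H.mulVec c = 0} ≃
        {w : Fin n → ZMod 2 // H.mulVec w = H.mulVec v})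
      (fun c => pV (v - c.1)) (fun w => pV w.1) (fun c => rfl)]
    simp only [hq]
    rw [← Finset.sum_filter]
    exact (Finset.sum_subtype _ (fun x => by simp) pV).symm
  have fib_card : ∀ u, Fintype.card {v : Fin n → ZMod 2 // H.mulVec v = u} = 2 ^ k := by
    intro u
    obtain ⟨v0, hv0⟩ := hrank u
    rw [← hdim]
    exact Fintype.card_congr
      { toFun := fun w => ⟨w.1 - v0, by rw [Matrix.mulVec_sub, w.2, hv0, sub_self]⟩
        invFun := fun c => ⟨c.1 + v0, by rw [Matrix.mulVec_add, c.2, hv0, zero_add]⟩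
        left_inv := fun w => by ext1; simp
        right_inv := fun c => by ext1; simp }
  unfold KLdiv
  simp only [key]
  set F : (Fin (n-k) → ZMod 2) → ℝ := fun u =>
    (1/(2^k:ℝ)) * q u * Real.logb 2 ((1/(2^k:ℝ)) * q u / (1/2^n)) with hF
  have hsum : (∑ v : Fin n → ZMod 2, F (H.mulVec v)) = ∑ u, (2^k : ℝ) * F u := by
    rw [← Fintype.sum_fiberwise (fun v => H.mulVec v) (fun v => F (H.mulVec v))]
    refine Finset.sum_congr rfl (fun u _ => ?_)
    rw [Fintype.sum_congr _ (fun _ => F u) (fun w => by rw [w.2])]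
    rw [Finset.sum_const, Finset.card_univ, fib_card u, nsmul_eq_mul]
    push_cast
    ring
  rw [show (∑ v : Fin n → ZMod 2, (1/(2^k:ℝ)) * q (H.mulVec v) *
      Real.logb 2 ((1/(2^k:ℝ)) * q (H.mulVec v) / (1/2^n))) = ∑ v, F (H.mulVec v) from rfl,
    hsum]
  refine Finset.sum_congr rfl (fun u _ => ?_)
  have h2k : (2:ℝ)^k ≠ 0 := by positivity
  have harg : (1/(2^k:ℝ)) * q u / (1/2^n) = q u / (1/2^(n-k)) := by
    rw [hpow]; field_simp
  rw [hF]
  simp only [harg]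
  field_simp
end

section
/- For a binomial distribution: if y is a vector of n i.i.d. Bernoulli(w/n) bits with 1 ≤ w ≤ n-1, then Pr(|y| = w) = C(n,w)(w/n)^w (1 - w/n)^{n-w} ≥ sqrt(n / (8 w (n-w))), where |y| is the Hamming weight. -/
open Stirling Real Nat

lemma zmod2_cases (z : ZMod 2) : z = 0 ∨ z = 1 := by revert z; decide

lemma card_wt (n w : ℕ) :
    (Finset.univ.filter fun y : Fin n → ZMod 2 =>
      (Finset.univ.filter fun i => y i = 1).card = w).card = n.choose w := by
  have h := Finset.card_powersetCard w (Finset.univ : Finset (Fin n))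
  rw [Finset.card_univ, Fintype.card_fin] at h
  rw [← h]
  apply Finset.card_nbij' (fun y => Finset.univ.filter fun i => y i = 1)
    (fun S => fun i => if i ∈ S then (1 : ZMod 2) else 0)
  · intro y hy
    simp only [Finset.mem_coe, Finset.mem_filter, Finset.mem_univ, true_and] at hy
    simp [Finset.mem_powersetCard, hy]
  · intro S hS
    simp only [Finset.mem_coe, Finset.mem_powersetCard] at hS
    simp only [Finset.mem_coe, Finset.mem_filter, Finset.mem_univ, true_and]
    rw [← hS.2]
    congr 1
    ext i
    by_cases h : i ∈ S <;> simp [h]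
  · intro y _
    funext i
    by_cases h : y i = 1
    · simp [h]
    · have h0 := zmod2_cases (y i)
      simp [h] at h0 ⊢
      simp [h0]
  · intro S _
    ext i
    by_cases h : i ∈ S <;> simp [h]

lemma card_neg (n w : ℕ) (y : Fin n → ZMod 2)
    (hy : (Finset.univ.filter fun i => y i = 1).card = w) :
    (Finset.univ.filter fun i => ¬ y i = 1).card = n - w := by
  have := Finset.card_filter_add_card_filter_not
    (s := (Finset.univ : Finset (Fin n))) (p := fun i => y i = 1)
  rw [Finset.card_univ, Fintype.card_fin, hy] at this
  omega

lemma part1 (n w : ℕ) :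
    (∑ y : Fin n → ZMod 2,
      if (Finset.univ.filter fun i => y i = 1).card = w
      then ∏ i, (if y i = 1 then (w : ℝ) / n else 1 - (w : ℝ) / n) else 0)
      = (n.choose w : ℝ) * ((w : ℝ) / n) ^ w * (1 - (w : ℝ) / n) ^ (n - w) := by
  rw [← Finset.sum_filter]
  rw [Finset.sum_congr rfl (g := fun _ => ((w : ℝ)/n) ^ w * (1 - (w:ℝ)/n) ^ (n - w)) ?_]
  · rw [Finset.sum_const, card_wt, nsmul_eq_mul]; ring
  · intro y hy
    simp only [Finset.mem_filter, Finset.mem_univ, true_and] at hy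
    rw [Finset.prod_ite (f := fun _ => (w:ℝ)/n) (g := fun _ => 1 - (w:ℝ)/n),
      Finset.prod_const, Finset.prod_const, hy, card_neg n w y hy]

lemma sqrt_pi_le_stirlingSeq (n : ℕ) : √π ≤ stirlingSeq (n + 1) :=
  stirlingSeq'_antitone.le_of_tendsto
    (tendsto_stirlingSeq_sqrt_pi.comp (Filter.tendsto_add_atTop_nat 1)) n

lemma stirlingSeq_pos' {n : ℕ} (hn : 1 ≤ n) : 0 < stirlingSeq n := by
  obtain ⟨m, rfl⟩ := Nat.exists_eq_add_of_le hn
  simpa [Nat.add_comm] using stirlingSeq'_pos m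

lemma stirlingSeq_le_stirlingSeq {a b : ℕ} (ha : 1 ≤ a) (hab : a ≤ b) :
    stirlingSeq b ≤ stirlingSeq a := by
  obtain ⟨m, rfl⟩ := Nat.exists_eq_add_of_le ha
  obtain ⟨k, rfl⟩ := Nat.exists_eq_add_of_le hab
  have := stirlingSeq'_antitone (Nat.le_add_right m k)
  simpa [Nat.add_assoc, Nat.add_comm, Nat.add_left_comm] using this

lemma stirlingSeq_two : stirlingSeq 2 = exp 1 ^ 2 / 4 := by
  rw [stirlingSeq]
  have h4 : √(2 * ((2:ℕ):ℝ)) = 2 := by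
    rw [show (2 * ((2:ℕ):ℝ)) = 2 ^ 2 by norm_num, Real.sqrt_sq (by norm_num)]
  rw [h4, div_pow]
  rw [show (Nat.factorial 2 : ℝ) = 2 by norm_num [Nat.factorial]]
  rw [eq_div_iff (by norm_num)]
  have he : (0:ℝ) < rexp 1 := Real.exp_pos 1
  field_simp
  ring

lemma stirlingSeq_three : stirlingSeq 3 = 2 * exp 1 ^ 3 / (9 * √6) := by
  rw [stirlingSeq]
  rw [show (2 * ((3:ℕ):ℝ)) = 6 by norm_num]
  rw [show (Nat.factorial 3 : ℝ) = 6 by norm_num [Nat.factorial]]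
  rw [div_pow, eq_div_iff (by positivity)]
  have h6 : (0:ℝ) < √6 := by positivity
  field_simp
  ring

lemma exp_one_pow_four : exp 1 ^ 4 ≤ 54.6 := by
  have h := Real.exp_one_lt_d9
  have h0 := Real.exp_pos 1
  have h2 : exp 1 ^ 2 ≤ 7.389057 := by nlinarith
  calc exp 1 ^ 4 = (exp 1 ^ 2) ^ 2 := by ring
    _ ≤ 7.389057 ^ 2 := by nlinarith
    _ ≤ 54.6 := by norm_num

lemma sqrt_pi_lb : (1.77245:ℝ) ≤ √π := by
  rw [Real.le_sqrt (by norm_num) (by positivity)]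
  nlinarith [Real.pi_gt_d6]

lemma prod_bound (a b : ℕ)
    (h : (2 ≤ a ∧ 2 ≤ b) ∨ (a = 1 ∧ 3 ≤ b) ∨ (b = 1 ∧ 3 ≤ a)) :
    stirlingSeq a * stirlingSeq b ≤ 2 * stirlingSeq (a + b) := by
  have hpi : √π ≤ stirlingSeq (a + b) := by
    have hn : 1 ≤ a + b := by omega
    obtain ⟨m, hm⟩ := Nat.exists_eq_add_of_le hn
    rw [hm, Nat.add_comm 1 m]
    exact sqrt_pi_le_stirlingSeq m
  have hpil := sqrt_pi_lb
  have he4 := exp_one_pow_four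
  have hepos : (0:ℝ) < exp 1 := Real.exp_pos 1
  rcases h with ⟨ha, hb⟩ | ⟨ha, hb⟩ | ⟨hb, ha⟩
  · have h1 : stirlingSeq a ≤ exp 1 ^ 2 / 4 :=
      stirlingSeq_two ▸ stirlingSeq_le_stirlingSeq (by norm_num) ha
    have h2 : stirlingSeq b ≤ exp 1 ^ 2 / 4 :=
      stirlingSeq_two ▸ stirlingSeq_le_stirlingSeq (by norm_num) hb
    have hb0 : 0 < stirlingSeq b := stirlingSeq_pos' (by omega)
    have ha0 : 0 < stirlingSeq a := stirlingSeq_pos' (by omega)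
    calc stirlingSeq a * stirlingSeq b ≤ (exp 1 ^ 2 / 4) * (exp 1 ^ 2 / 4) := by
            apply mul_le_mul h1 h2 (le_of_lt hb0) (by positivity)
      _ ≤ 2 * √π := by nlinarith
      _ ≤ 2 * stirlingSeq (a + b) := by linarith
  · have h1 : stirlingSeq a = exp 1 / √2 := by rw [ha, stirlingSeq_one]
    have h2 : stirlingSeq b ≤ 2 * exp 1 ^ 3 / (9 * √6) :=
      stirlingSeq_three ▸ stirlingSeq_le_stirlingSeq (by norm_num) hb
    have hb0 : 0 < stirlingSeq b := stirlingSeq_pos' (by omega)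
    have h2' : (0:ℝ) < √2 := by positivity
    have h6' : (0:ℝ) < √6 := by positivity
    have h2l : (1.41421:ℝ) ≤ √2 := by
      rw [Real.le_sqrt (by norm_num) (by norm_num)]; norm_num
    have h6l : (2.44948:ℝ) ≤ √6 := by
      rw [Real.le_sqrt (by norm_num) (by norm_num)]; norm_num
    calc stirlingSeq a * stirlingSeq b ≤ (exp 1 / √2) * (2 * exp 1 ^ 3 / (9 * √6)) := by
            rw [h1]; apply mul_le_mul_of_nonneg_left h2 (by positivity)
      _ ≤ 2 * √π := by
            rw [_root_.div_mul_div_comm, div_le_iff₀ (by positivity)]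
            nlinarith [mul_pos h2' h6', sq_nonneg (√2 * √6)]
      _ ≤ 2 * stirlingSeq (a + b) := by linarith
  · have h1 : stirlingSeq b = exp 1 / √2 := by rw [hb, stirlingSeq_one]
    have h2 : stirlingSeq a ≤ 2 * exp 1 ^ 3 / (9 * √6) :=
      stirlingSeq_three ▸ stirlingSeq_le_stirlingSeq (by norm_num) ha
    have ha0 : 0 < stirlingSeq a := stirlingSeq_pos' (by omega)
    have h2' : (0:ℝ) < √2 := by positivity
    have h6' : (0:ℝ) < √6 := by positivity
    have h2l : (1.41421:ℝ) ≤ √2 := by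
      rw [Real.le_sqrt (by norm_num) (by norm_num)]; norm_num
    have h6l : (2.44948:ℝ) ≤ √6 := by
      rw [Real.le_sqrt (by norm_num) (by norm_num)]; norm_num
    calc stirlingSeq a * stirlingSeq b ≤ (2 * exp 1 ^ 3 / (9 * √6)) * (exp 1 / √2) := by
            rw [h1]; apply mul_le_mul_of_nonneg_right h2 (by positivity)
      _ ≤ 2 * √π := by
            rw [_root_.div_mul_div_comm, div_le_iff₀ (by positivity)]
            nlinarith [mul_pos h2' h6', sq_nonneg (√2 * √6)]
      _ ≤ 2 * stirlingSeq (a + b) := by linarith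

lemma factorial_stirling (n : ℕ) (hn : 1 ≤ n) :
    (n ! : ℝ) = stirlingSeq n * (√(2 * n) * ((n : ℝ) / exp 1) ^ n) := by
  rw [stirlingSeq, div_mul_cancel₀]
  have h1 : (0:ℝ) < n := by exact_mod_cast hn
  positivity

lemma main_ineq (a b : ℕ) (ha : 1 ≤ a) (hb : 1 ≤ b)
    (hs : stirlingSeq a * stirlingSeq b ≤ 2 * stirlingSeq (a + b)) :
    Real.sqrt (((a:ℝ) + b) / (8 * a * b))
      ≤ ((a + b).choose a : ℝ) * ((a : ℝ) / ((a:ℝ) + b)) ^ a * ((b : ℝ) / ((a:ℝ) + b)) ^ b := by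
  have hA : (0:ℝ) < a := by exact_mod_cast ha
  have hB : (0:ℝ) < b := by exact_mod_cast hb
  have hX : (0:ℝ) < (a:ℝ) + b := by linarith
  have hE : (0:ℝ) < exp 1 := Real.exp_pos 1
  have hsA : 0 < stirlingSeq a := stirlingSeq_pos' ha
  have hsB : 0 < stirlingSeq b := stirlingSeq_pos' hb
  have hsN : 0 < stirlingSeq (a + b) := stirlingSeq_pos' (by omega)
  set sA := stirlingSeq a
  set sB := stirlingSeq b
  set sN := stirlingSeq (a + b)
  set C : ℝ := ((a + b).choose a : ℝ) with hC
  set pa : ℝ := ((a : ℝ) / ((a:ℝ) + b)) ^ a with hpa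
  set pb : ℝ := ((b : ℝ) / ((a:ℝ) + b)) ^ b with hpb
  have hfa := factorial_stirling a ha
  have hfb := factorial_stirling b hb
  have hfn := factorial_stirling (a + b) (by omega)
  rw [show ((a + b : ℕ) : ℝ) = (a:ℝ) + b by push_cast; ring] at hfn
  have hch : C * (a ! : ℝ) * (b ! : ℝ) = ((a + b)! : ℝ) := by
    have h := Nat.choose_mul_factorial_mul_factorial (Nat.le_add_right a b)
    rw [Nat.add_sub_cancel_left] at h
    rw [hC]
    exact_mod_cast congrArg (Nat.cast : ℕ → ℝ) h
  have hP : pa * pb * (((a:ℝ) + b) / exp 1) ^ (a + b)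
      = ((a:ℝ) / exp 1) ^ a * ((b:ℝ) / exp 1) ^ b := by
    rw [hpa, hpb, pow_add]
    rw [show ((a:ℝ) / ((a:ℝ) + b)) ^ a * ((b:ℝ) / ((a:ℝ) + b)) ^ b
        * ((((a:ℝ) + b) / exp 1) ^ a * (((a:ℝ) + b) / exp 1) ^ b)
      = ((a:ℝ) / ((a:ℝ) + b) * (((a:ℝ) + b) / exp 1)) ^ a
        * ((b:ℝ) / ((a:ℝ) + b) * (((a:ℝ) + b) / exp 1)) ^ b by
        rw [mul_pow, mul_pow]; ring]
    have c1 : (a:ℝ) / ((a:ℝ) + b) * (((a:ℝ) + b) / exp 1) = (a:ℝ) / exp 1 := by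
      field_simp
    have c2 : (b:ℝ) / ((a:ℝ) + b) * (((a:ℝ) + b) / exp 1) = (b:ℝ) / exp 1 := by
      field_simp
    rw [c1, c2]
  have e1 : C * pa * pb * ((a ! : ℝ) * (b ! : ℝ)) = ((a + b)! : ℝ) * (pa * pb) := by
    rw [← hch]; ring
  rw [hfa, hfb, hfn] at e1
  have e2 : sN * (√(2 * ((a:ℝ) + b)) * (((a:ℝ) + b) / exp 1) ^ (a + b)) * (pa * pb)
      = sN * √(2 * ((a:ℝ) + b)) * (((a:ℝ) / exp 1) ^ a * ((b:ℝ) / exp 1) ^ b) := by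
    linear_combination (sN * √(2 * ((a:ℝ) + b))) * hP
  have e3 : C * pa * pb * (sA * sB * (√(2 * (a:ℝ)) * √(2 * (b:ℝ))))
        * (((a:ℝ) / exp 1) ^ a * ((b:ℝ) / exp 1) ^ b)
      = sN * √(2 * ((a:ℝ) + b)) * (((a:ℝ) / exp 1) ^ a * ((b:ℝ) / exp 1) ^ b) := by
    linear_combination e1 + e2
  have hk : (0:ℝ) < ((a:ℝ) / exp 1) ^ a * ((b:ℝ) / exp 1) ^ b := by positivity
  have e4 : C * pa * pb * (sA * sB * (√(2 * (a:ℝ)) * √(2 * (b:ℝ))))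
      = sN * √(2 * ((a:ℝ) + b)) := mul_right_cancel₀ (ne_of_gt hk) e3
  have key : C * pa * pb
      = sN * √(2 * ((a:ℝ) + b)) / (sA * sB * (√(2 * (a:ℝ)) * √(2 * (b:ℝ)))) := by
    rw [eq_div_iff (by positivity)]; exact e4
  have hq : √(2 * (a:ℝ)) * √(2 * (b:ℝ)) = √(4 * ((a:ℝ) * b)) := by
    rw [← Real.sqrt_mul (by positivity)]; ring_nf
  have q1 : √(2 * ((a:ℝ) + b)) / √(4 * ((a:ℝ) * b)) = √(2 * ((a:ℝ) + b) / (4 * ((a:ℝ) * b))) :=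
    (Real.sqrt_div (by positivity) _).symm
  have q2 : √(((a:ℝ) + b) / (8 * a * b)) = √(2 * ((a:ℝ) + b) / (4 * ((a:ℝ) * b))) / 2 := by
    rw [show 2 * ((a:ℝ) + b) / (4 * ((a:ℝ) * b)) = (((a:ℝ) + b) / (8 * a * b)) * 4 by
      field_simp; ring]
    rw [Real.sqrt_mul (by positivity), show √(4:ℝ) = 2 by
      rw [show (4:ℝ) = 2 ^ 2 by norm_num, Real.sqrt_sq (by norm_num)]]
    ring
  have hhalf : (1:ℝ)/2 ≤ sN / (sA * sB) := by
    rw [le_div_iff₀ (by positivity)]; linarith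
  calc √(((a:ℝ) + b) / (8 * a * b))
      = (1/2) * (√(2 * ((a:ℝ) + b)) / √(4 * ((a:ℝ) * b))) := by rw [q1, q2]; ring
    _ ≤ (sN / (sA * sB)) * (√(2 * ((a:ℝ) + b)) / √(4 * ((a:ℝ) * b))) := by
        apply mul_le_mul_of_nonneg_right hhalf (by positivity)
    _ = sN * √(2 * ((a:ℝ) + b)) / (sA * sB * (√(2 * (a:ℝ)) * √(2 * (b:ℝ)))) := by
        rw [hq]; ring
    _ = C * pa * pb := key.symm

/-- For `y` a vector of `n` i.i.d. Bernoulli(w/n) bits with `1 ≤ w ≤ n-1`,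
`Pr(|y| = w) = C(n,w)(w/n)^w (1-w/n)^(n-w) ≥ sqrt(n/(8w(n-w)))`. -/
theorem stmt_6 (n w : ℕ) (hw1 : 1 ≤ w) (hwn : w ≤ n - 1) :
    (∑ y : Fin n → ZMod 2,
      if (Finset.univ.filter fun i => y i = 1).card = w
      then ∏ i, (if y i = 1 then (w : ℝ) / n else 1 - (w : ℝ) / n) else 0)
      = (n.choose w : ℝ) * ((w : ℝ) / n) ^ w * (1 - (w : ℝ) / n) ^ (n - w)
    ∧ Real.sqrt ((n : ℝ) / (8 * w * (n - w)))
      ≤ (n.choose w : ℝ) * ((w : ℝ) / n) ^ w * (1 - (w : ℝ) / n) ^ (n - w) := by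
  have hn2 : 2 ≤ n := by omega
  constructor
  · exact part1 n w
  · obtain ⟨b, rfl⟩ := Nat.exists_eq_add_of_le (show w ≤ n by omega)
    have hb1 : 1 ≤ b := by omega
    have hB : (0:ℝ) < b := by exact_mod_cast hb1
    have hW : (0:ℝ) < w := by exact_mod_cast hw1
    have hX : (0:ℝ) < (w:ℝ) + b := by linarith
    have hcast : ((w + b : ℕ) : ℝ) = (w:ℝ) + b := by push_cast; ring
    rw [hcast, Nat.add_sub_cancel_left]
    rw [show ((w:ℝ) + b) / (8 * w * ((w:ℝ) + b - w)) = ((w:ℝ) + b) / (8 * w * b) by ring_nf]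
    rw [show 1 - (w:ℝ) / ((w:ℝ) + b) = (b:ℝ) / ((w:ℝ) + b) by
      rw [eq_div_iff (ne_of_gt hX), sub_mul, one_mul, div_mul_cancel₀ _ (ne_of_gt hX)]; ring]
    by_cases hsmall : w + b ≤ 3
    · have hw3 : w ≤ 2 := by omega
      have hb3 : b ≤ 2 := by omega
      interval_cases w <;> interval_cases b <;> first | omega | skip
      · -- w = 1, b = 1
        rw [show ((1:ℕ):ℝ) + ((1:ℕ):ℝ) = 2 by norm_num]
        rw [show (2:ℝ) / (8 * ((1:ℕ):ℝ) * ((1:ℕ):ℝ)) = (1/2)^2 by norm_num]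
        rw [Real.sqrt_sq (by norm_num)]
        norm_num
      · -- w = 1, b = 2
        rw [show ((1:ℕ):ℝ) + ((2:ℕ):ℝ) = 3 by norm_num]
        rw [Real.sqrt_le_iff]
        norm_num [Nat.choose]
      · -- w = 2, b = 1
        rw [show ((2:ℕ):ℝ) + ((1:ℕ):ℝ) = 3 by norm_num]
        rw [Real.sqrt_le_iff]
        norm_num [Nat.choose]
    · exact main_ineq w b hw1 hb1 (prod_bound w b (by omega))
end

section
/- Let H be a random m×n binary matrix drawn uniformly from a finite set of matrices 𝓗, let V be a random vector in F_2^n independent of H, let α ∈ (1,2), t ∈ {0,...,n}, ν_t the volume of the Hamming ball of radius t, and Γ(0,t) the union of Hamming balls of radius t around 0 and around the all-ones vector. Then 2^{(α-1) D_α(P_{HV,H} || U_{F_2^m} × P_H)} ≤ 2 ν_t 2^{(α-1)(m − H_α(P_V))} + (2^m Σ_{v ∉ Γ(0,t)} Pr(Hv = 0) (P_V * P_V)(v))^{α-1}. -/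
/-- Hamming weight of a binary vector. -/
def wt {n : ℕ} (v : Fin n → ZMod 2) : ℕ :=
  (Finset.univ.filter fun j => v j = 1).card

lemma rpow_add_le_add_rpow' {p x y : ℝ} (hx : 0 ≤ x) (hy : 0 ≤ y) (hp : 0 ≤ p) (hp1 : p ≤ 1) :
    (x + y) ^ p ≤ x ^ p + y ^ p := by
  lift x to NNReal using hx
  lift y to NNReal using hy
  exact_mod_cast NNReal.rpow_add_le_add_rpow x y hp hp1

lemma sum_rpow_le' {ι : Type*} {s : Finset ι} {f : ι → ℝ} (hf : ∀ i ∈ s, 0 ≤ f i) {p : ℝ}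
    (hp0 : 0 < p) (hp1 : p ≤ 1) :
    (∑ i ∈ s, f i) ^ p ≤ ∑ i ∈ s, f i ^ p := by
  induction s using Finset.cons_induction with
  | empty => simp [Real.zero_rpow hp0.ne']
  | cons a s ha ih =>
    rw [Finset.sum_cons, Finset.sum_cons]
    have h1 : 0 ≤ f a := hf a (Finset.mem_cons_self _ _)
    have h2 : ∀ i ∈ s, 0 ≤ f i := fun i hi => hf i (Finset.mem_cons_of_mem hi)
    calc (f a + ∑ i ∈ s, f i) ^ p ≤ f a ^ p + (∑ i ∈ s, f i) ^ p :=
          rpow_add_le_add_rpow' h1 (Finset.sum_nonneg h2) hp0.le hp1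
      _ ≤ _ := by gcongr; exact ih h2

lemma jensen_rpow' {ι : Type*} [Fintype ι] {w z : ι → ℝ} (hw : ∀ i, 0 ≤ w i)
    (hw1 : ∑ i, w i ≤ 1) (hz : ∀ i, 0 ≤ z i) {p : ℝ} (hp0 : 0 < p) (hp1 : p < 1) :
    ∑ i, w i * z i ^ p ≤ (∑ i, w i * z i) ^ p := by
  have hP : (1:ℝ) ≤ p⁻¹ := (one_le_inv₀ hp0).mpr hp1.le
  have key := Real.inner_le_weight_mul_Lp_of_nonneg Finset.univ hP w (fun i => z i ^ p) hw
    (fun i => Real.rpow_nonneg (hz i) p)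
  have hzz : ∀ i, (z i ^ p) ^ p⁻¹ = z i := fun i => by
    rw [← Real.rpow_mul (hz i), mul_inv_cancel₀ hp0.ne', Real.rpow_one]
  simp only [inv_inv, hzz] at key
  refine key.trans ?_
  have h1 : (∑ i, w i) ^ (1 - p) ≤ 1 :=
    Real.rpow_le_one (Finset.sum_nonneg fun i _ => hw i) hw1 (by linarith)
  have h2 : 0 ≤ (∑ i, w i * z i) ^ p :=
    Real.rpow_nonneg (Finset.sum_nonneg fun i _ => mul_nonneg (hw i) (hz i)) p
  exact mul_le_of_le_one_left h2 h1


lemma card_wt_le (n t : ℕ) :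
    (Finset.univ.filter fun v : Fin n → ZMod 2 => wt v ≤ t).card
      ≤ ∑ i ∈ Finset.range (t + 1), n.choose i := by
  classical
  set T := (Finset.range (t+1)).biUnion
    (fun i => Finset.powersetCard i (Finset.univ : Finset (Fin n))) with hT
  have hmap : ∀ v ∈ Finset.univ.filter (fun v : Fin n → ZMod 2 => wt v ≤ t),
      (Finset.univ.filter fun j => v j = 1) ∈ T := by
    intro v hv
    rw [Finset.mem_filter] at hv
    refine Finset.mem_biUnion.mpr ⟨wt v, Finset.mem_range.mpr (Nat.lt_succ_of_le hv.2), ?_⟩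
    rw [Finset.mem_powersetCard_univ]; rfl
  have hinj : Set.InjOn (fun v : Fin n → ZMod 2 => Finset.univ.filter fun j => v j = 1)
      (Finset.univ.filter fun v : Fin n → ZMod 2 => wt v ≤ t) := by
    intro v _ v' _ h
    funext j
    have h01 : ∀ x : ZMod 2, x = 0 ∨ x = 1 := by decide
    have := Finset.ext_iff.mp h j
    simp only [Finset.mem_filter, Finset.mem_univ, true_and] at this
    rcases h01 (v j) with h1 | h1 <;> rcases h01 (v' j) with h2 | h2 <;>
      simp [h1, h2] at this ⊢ <;> tauto
  calc _ ≤ T.card := Finset.card_le_card_of_injOn _ hmap hinj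
    _ ≤ ∑ i ∈ Finset.range (t+1),
          (Finset.powersetCard i (Finset.univ : Finset (Fin n))).card :=
        Finset.card_biUnion_le
    _ = _ := by simp [Finset.card_powersetCard]

lemma wt_add_one {n : ℕ} (v : Fin n → ZMod 2) : wt (fun j => v j + 1) = n - wt v := by
  classical
  have h1 : ∀ x : ZMod 2, (x + 1 = 1) ↔ ¬(x = 1) := by decide
  have : (Finset.univ.filter fun j => v j + 1 = 1)
      = (Finset.univ.filter fun j => ¬ v j = 1) := by
    apply Finset.filter_congr; intro j _; simp [h1]
  rw [wt, this, Finset.filter_not, Finset.card_sdiff_of_subset (Finset.filter_subset _ _)]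
  simp [wt]

lemma card_Gamma_le (n t : ℕ) :
    (Finset.univ.filter fun v : Fin n → ZMod 2 => wt v ≤ t ∨ n - wt v ≤ t).card
      ≤ 2 * ∑ i ∈ Finset.range (t + 1), n.choose i := by
  classical
  rw [Finset.filter_or]
  refine (Finset.card_union_le _ _).trans ?_
  have h2 : (Finset.univ.filter fun v : Fin n → ZMod 2 => n - wt v ≤ t).card
      ≤ (Finset.univ.filter fun v : Fin n → ZMod 2 => wt v ≤ t).card := by
    apply Finset.card_le_card_of_injOn (fun v => fun j => v j + 1)
    · intro v hv
      rw [Finset.mem_coe, Finset.mem_filter] at hv ⊢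
      exact ⟨Finset.mem_univ _, by rw [wt_add_one]; exact hv.2⟩
    · intro v _ v' _ h
      funext j
      have := congrFun h j
      simpa using this
  have h1 := card_wt_le n t
  omega

set_option maxHeartbeats 1000000 in
/-- Main smoothing bound: for `H` uniform on a set `𝓗` of `m × n` binary matrices, `V`
independent of `H`, `α ∈ (1,2)` and `t ≤ n`,
`2^{(α-1) D_α(P_{HV,H} ‖ U × P_H)} ≤ 2 ν_t 2^{(α-1)(m − H_α(P_V))}
  + (2^m ∑_{v ∉ Γ(0,t)} Pr(Hv = 0) (P_V * P_V)(v))^{α-1}`. -/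
theorem stmt_12 (n m t : ℕ) (ht : t ≤ n) (a : ℝ) (ha1 : 1 < a) (ha2 : a < 2)
    (Hs : Finset (Matrix (Fin m) (Fin n) (ZMod 2))) (hHs : Hs.Nonempty)
    (pV : (Fin n → ZMod 2) → ℝ) (hV0 : ∀ v, 0 ≤ pV v) (hV1 : ∑ v, pV v = 1)
    (Pjoint : (Fin m → ZMod 2) × Matrix (Fin m) (Fin n) (ZMod 2) → ℝ)
    (hPjoint : ∀ u A, Pjoint (u, A) =
      if A ∈ Hs then (1 / (Hs.card : ℝ)) * ∑ v, (if A.mulVec v = u then pV v else 0) else 0)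
    (Q : (Fin m → ZMod 2) × Matrix (Fin m) (Fin n) (ZMod 2) → ℝ)
    (hQ : ∀ u A, Q (u, A) =
      (1 / (2 ^ m : ℝ)) * (if A ∈ Hs then 1 / (Hs.card : ℝ) else 0))
    (Dα : ℝ) (hD : Dα = (1 / (a - 1)) * Real.logb 2 (∑ x, Pjoint x ^ a * Q x ^ (1 - a)))
    (Hα : ℝ) (hH : Hα = (1 / (1 - a)) * Real.logb 2 (∑ v, pV v ^ a))
    (ν : ℕ) (hν : ν = ∑ i ∈ Finset.range (t + 1), n.choose i) :
    (2 : ℝ) ^ ((a - 1) * Dα)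
      ≤ 2 * ν * (2 : ℝ) ^ ((a - 1) * ((m : ℝ) - Hα))
        + ((2 ^ m : ℝ) * ∑ v ∈ Finset.univ.filter
              (fun v : Fin n → ZMod 2 => ¬(wt v ≤ t ∨ n - wt v ≤ t)),
            ((Hs.filter fun A => A.mulVec v = 0).card / (Hs.card : ℝ))
              * ∑ v', pV v' * pV (v + v')) ^ (a - 1) := by
  classical
  set b : ℝ := a - 1 with hb
  have hb0 : 0 < b := by simp [hb]; linarith
  have hb1 : b < 1 := by simp [hb]; linarith
  have hcard : (0:ℝ) < (Hs.card : ℝ) := by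
    exact_mod_cast Finset.card_pos.mpr hHs
  set c : ℝ := 1 / (Hs.card : ℝ) with hc
  have hc0 : 0 < c := by positivity
  have h2m : (0:ℝ) < (2 ^ m : ℝ) := by positivity
  set E : ℝ := ((2:ℝ) ^ m) ^ b with hE
  have hE0 : 0 < E := Real.rpow_pos_of_pos h2m b
  set K : ℝ := ∑ v, pV v ^ a with hK
  obtain ⟨v0, hv0⟩ : ∃ v, 0 < pV v := by
    by_contra h
    push_neg at h
    have h0 : ∑ v, pV v = 0 :=
      Finset.sum_eq_zero fun v _ => le_antisymm (h v) (hV0 v)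
    rw [hV1] at h0; norm_num at h0
  have hK0 : 0 < K := by
    rw [hK]
    refine Finset.sum_pos' (fun v _ => Real.rpow_nonneg (hV0 v) a) ⟨v0, Finset.mem_univ _, ?_⟩
    exact Real.rpow_pos_of_pos hv0 a
  set S : ℝ := ∑ x, Pjoint x ^ a * Q x ^ (1 - a) with hS
  -- LHS equals S
  have hPj0 : ∀ x, 0 ≤ Pjoint x := by
    rintro ⟨u, A⟩
    rw [hPjoint]
    split
    · refine mul_nonneg (by positivity) (Finset.sum_nonneg fun v _ => ?_)
      split <;> [exact hV0 v; exact le_rfl]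
    · exact le_rfl
  have hQ0 : ∀ x, 0 ≤ Q x := by
    rintro ⟨u, A⟩
    rw [hQ]
    refine mul_nonneg (by positivity) ?_
    split <;> positivity
  obtain ⟨A0, hA0⟩ := hHs
  have hS0 : 0 < S := by
    have hterm0 : 0 < Pjoint (A0.mulVec v0, A0) ^ a * Q (A0.mulVec v0, A0) ^ (1 - a) := by
      have hp : 0 < Pjoint (A0.mulVec v0, A0) := by
        rw [hPjoint, if_pos hA0]
        refine mul_pos hc0 ?_
        refine lt_of_lt_of_le hv0 ?_
        have := Finset.single_le_sum (f := fun v => if A0.mulVec v = A0.mulVec v0 then pV v else 0)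
          (fun v _ => by split <;> [exact hV0 v; exact le_rfl]) (Finset.mem_univ v0)
        simpa using this
      have hq : 0 < Q (A0.mulVec v0, A0) := by
        rw [hQ, if_pos hA0]
        positivity
      exact mul_pos (Real.rpow_pos_of_pos hp a) (Real.rpow_pos_of_pos hq (1 - a))
    rw [hS]
    refine lt_of_lt_of_le hterm0 ?_
    exact Finset.single_le_sum
      (f := fun x => Pjoint x ^ a * Q x ^ (1 - a))
      (fun x _ => mul_nonneg (Real.rpow_nonneg (hPj0 x) a) (Real.rpow_nonneg (hQ0 x) (1 - a)))
      (Finset.mem_univ _)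
  have hLHS : (2 : ℝ) ^ ((a - 1) * Dα) = S := by
    have hane : a - 1 ≠ 0 := by linarith
    rw [hD]
    rw [show (a - 1) * (1 / b * Real.logb 2 S) = Real.logb 2 S by rw [hb]; field_simp]
    exact Real.rpow_logb (by norm_num) (by norm_num) hS0
  -- first RHS term
  have hEK : (2 : ℝ) ^ ((a - 1) * ((m : ℝ) - Hα)) = E * K := by
    have hne : (1:ℝ) - a ≠ 0 := by linarith
    have h1 : (a - 1) * ((m:ℝ) - Hα) = (m:ℝ) * b + Real.logb 2 K := by
      rw [hH, hb]; field_simp; ring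
    have h2 : (2:ℝ) ^ ((m:ℝ) * b) = E := by
      rw [Real.rpow_mul (by norm_num : (0:ℝ) ≤ 2), Real.rpow_natCast, hE]
    rw [h1, Real.rpow_add (by norm_num : (0:ℝ) < 2), h2,
      Real.rpow_logb (by norm_num) (by norm_num) hK0]
  have hRHS1 : 2 * (ν:ℝ) * (2 : ℝ) ^ ((a - 1) * ((m : ℝ) - Hα)) = 2 * ν * (E * K) := by
    rw [hEK]
  -- self-inverse addition in characteristic two
  have hvv : ∀ x : Fin n → ZMod 2, x + x = 0 := by
    intro x; funext j
    exact CharTwo.add_self_eq_zero (x j)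
  have hcan : ∀ v v' : Fin n → ZMod 2, v + (v + v') = v' := by
    intro v v'; rw [← add_assoc, hvv, zero_add]
  have hane : a ≠ 0 := by linarith
  -- conditional probability of u given A
  set pA : Matrix (Fin m) (Fin n) (ZMod 2) → (Fin m → ZMod 2) → ℝ :=
    fun A u => ∑ v, if A.mulVec v = u then pV v else 0 with hpA
  have hpA' : ∀ A u, pA A u = ∑ v, if A.mulVec v = u then pV v else 0 := fun A u => rfl
  have hpA0 : ∀ A u, 0 ≤ pA A u := by
    intro A u; rw [hpA']
    exact Finset.sum_nonneg fun v _ => by split <;> [exact hV0 v; exact le_rfl]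
  -- near and far parts
  set gf : Matrix (Fin m) (Fin n) (ZMod 2) → (Fin m → ZMod 2) → (Fin n → ZMod 2) → ℝ :=
    fun A u v => ∑ v', if wt (v + v') ≤ t ∨ n - wt (v + v') ≤ t then
      (if A.mulVec v' = u then pV v' else 0) else 0 with hgf
  set hf : Matrix (Fin m) (Fin n) (ZMod 2) → (Fin m → ZMod 2) → (Fin n → ZMod 2) → ℝ :=
    fun A u v => ∑ v', if ¬(wt (v + v') ≤ t ∨ n - wt (v + v') ≤ t) then
      (if A.mulVec v' = u then pV v' else 0) else 0 with hhf
  have hgf' : ∀ A u v, gf A u v = ∑ v', if wt (v + v') ≤ t ∨ n - wt (v + v') ≤ t then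
      (if A.mulVec v' = u then pV v' else 0) else 0 := fun A u v => rfl
  have hhf' : ∀ A u v, hf A u v = ∑ v', if ¬(wt (v + v') ≤ t ∨ n - wt (v + v') ≤ t) then
      (if A.mulVec v' = u then pV v' else 0) else 0 := fun A u v => rfl
  have hg0 : ∀ A u v, 0 ≤ gf A u v := by
    intro A u v; rw [hgf']
    refine Finset.sum_nonneg fun v' _ => ?_
    split
    · split <;> [exact hV0 v'; exact le_rfl]
    · exact le_rfl
  have hh0 : ∀ A u v, 0 ≤ hf A u v := by
    intro A u v; rw [hhf']
    refine Finset.sum_nonneg fun v' _ => ?_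
    split
    · split <;> [exact hV0 v'; exact le_rfl]
    · exact le_rfl
  have hgh : ∀ A u v, pA A u = gf A u v + hf A u v := by
    intro A u v
    rw [hpA', hgf', hhf', ← Finset.sum_add_distrib]
    refine Finset.sum_congr rfl fun v' _ => ?_
    rcases em (wt (v + v') ≤ t ∨ n - wt (v + v') ≤ t) with h | h
    · rw [if_pos h, if_neg (not_not_intro h), add_zero]
    · rw [if_neg h, if_pos h, zero_add]
  -- per-term formula for the summand of S
  have hterm : ∀ u A, Pjoint (u, A) ^ a * Q (u, A) ^ (1 - a)
      = if A ∈ Hs then c * E * pA A u ^ a else 0 := by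
    intro u A
    rw [hPjoint, hQ]
    by_cases hA : A ∈ Hs
    · rw [if_pos hA, if_pos hA, if_pos hA, ← hpA' A u]
      have hp0 : 0 ≤ pA A u := hpA0 A u
      rw [Real.mul_rpow hc0.le hp0, Real.mul_rpow (by positivity) hc0.le]
      have h1 : c ^ a * c ^ (1 - a) = c := by
        rw [← Real.rpow_add hc0]; norm_num
      have h2 : ((1 : ℝ) / 2 ^ m) ^ (1 - a) = E := by
        rw [one_div, ← Real.rpow_neg_one ((2:ℝ)^m), ← Real.rpow_natCast (2:ℝ) m,
          ← Real.rpow_mul (by norm_num : (0:ℝ) ≤ 2),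
          ← Real.rpow_mul (by norm_num : (0:ℝ) ≤ 2), hE,
          ← Real.rpow_natCast (2:ℝ) m, ← Real.rpow_mul (by norm_num : (0:ℝ) ≤ 2)]
        congr 1; rw [hb]; ring
      rw [h2]
      calc c ^ a * pA A u ^ a * (E * c ^ (1 - a))
          = (c ^ a * c ^ (1 - a)) * E * pA A u ^ a := by ring
        _ = c * E * pA A u ^ a := by rw [h1]
    · rw [if_neg hA, if_neg hA, if_neg hA, mul_zero,
        Real.zero_rpow hane, Real.zero_rpow (by linarith : (1:ℝ) - a ≠ 0), zero_mul]
  have hSsum : S = ∑ u, ∑ A ∈ Hs, c * E * pA A u ^ a := by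
    rw [hS, Fintype.sum_prod_type]
    refine Finset.sum_congr rfl fun u _ => ?_
    simp only [hterm]
    rw [Finset.sum_ite_mem, Finset.univ_inter]
  -- x^a = x * x^b for x ≥ 0
  have hx_pow : ∀ x : ℝ, 0 ≤ x → x ^ a = x * x ^ b := by
    intro x hx
    rcases hx.eq_or_lt with h | h
    · rw [← h, Real.zero_rpow hane, Real.zero_rpow hb0.ne', mul_zero]
    · rw [show a = 1 + b by rw [hb]; ring, Real.rpow_add h, Real.rpow_one]
  -- pointwise decomposition bound
  have hpoint : ∀ A u, pA A u ^ a
      ≤ ∑ v, (if A.mulVec v = u then pV v else 0) * (gf A u v ^ b + hf A u v ^ b) := by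
    intro A u
    have hdecomp : ∀ v, pA A u ^ b ≤ gf A u v ^ b + hf A u v ^ b := by
      intro v
      rw [hgh A u v]
      exact rpow_add_le_add_rpow' (hg0 A u v) (hh0 A u v) hb0.le hb1.le
    calc pA A u ^ a = ∑ v, (if A.mulVec v = u then pV v else 0) * pA A u ^ b := by
          rw [hx_pow _ (hpA0 A u), ← Finset.sum_mul, ← hpA' A u]
      _ ≤ _ := by
          refine Finset.sum_le_sum fun v _ => ?_
          have h0 : 0 ≤ (if A.mulVec v = u then pV v else 0) := by
            split <;> [exact hV0 v; exact le_rfl]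
          exact mul_le_mul_of_nonneg_left (hdecomp v) h0
  set T1 : ℝ := ∑ u, ∑ A ∈ Hs, c * E * ∑ v,
      (if A.mulVec v = u then pV v else 0) * gf A u v ^ b with hT1
  set T2 : ℝ := ∑ u, ∑ A ∈ Hs, c * E * ∑ v,
      (if A.mulVec v = u then pV v else 0) * hf A u v ^ b with hT2
  have hS_le : S ≤ T1 + T2 := by
    rw [hSsum, hT1, hT2]
    calc ∑ u, ∑ A ∈ Hs, c * E * pA A u ^ a
        ≤ ∑ u, ∑ A ∈ Hs, c * E * ∑ v,
            (if A.mulVec v = u then pV v else 0) * (gf A u v ^ b + hf A u v ^ b) := by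
          refine Finset.sum_le_sum fun u _ => Finset.sum_le_sum fun A _ => ?_
          exact mul_le_mul_of_nonneg_left (hpoint A u) (mul_nonneg hc0.le hE0.le)
      _ = _ := by
          simp only [mul_add, Finset.sum_add_distrib]
  -- bound on the near part by a sum over the ball
  have hgb : ∀ (A : Matrix (Fin m) (Fin n) (ZMod 2)) u v, gf A u v ^ b
      ≤ ∑ w, if wt w ≤ t ∨ n - wt w ≤ t then pV (v + w) ^ b else 0 := by
    intro A u v
    calc gf A u v ^ b
        ≤ ∑ v', (if wt (v + v') ≤ t ∨ n - wt (v + v') ≤ t then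
            (if A.mulVec v' = u then pV v' else 0) else 0) ^ b := by
          rw [hgf']
          refine sum_rpow_le' (fun v' _ => ?_) hb0 hb1.le
          split
          · split <;> [exact hV0 v'; exact le_rfl]
          · exact le_rfl
      _ ≤ ∑ v', if wt (v + v') ≤ t ∨ n - wt (v + v') ≤ t then pV v' ^ b else 0 := by
          refine Finset.sum_le_sum fun v' _ => ?_
          by_cases hPw : wt (v + v') ≤ t ∨ n - wt (v + v') ≤ t
          · rw [if_pos hPw, if_pos hPw]
            by_cases hAv : A.mulVec v' = u
            · rw [if_pos hAv]
            · rw [if_neg hAv, Real.zero_rpow hb0.ne']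
              exact Real.rpow_nonneg (hV0 v') b
          · rw [if_neg hPw, if_neg hPw, Real.zero_rpow hb0.ne']
      _ = ∑ w, if wt w ≤ t ∨ n - wt w ≤ t then pV (v + w) ^ b else 0 := by
          rw [← Equiv.sum_comp (Equiv.addLeft v)
            (fun w => if wt w ≤ t ∨ n - wt w ≤ t then pV (v + w) ^ b else 0)]
          refine Finset.sum_congr rfl fun v' _ => ?_
          simp only [Equiv.coe_addLeft]
          rw [hcan]
          rfl
  -- Hoelder inequality step
  have ha1' : a - 1 ≠ 0 := by linarith
  have hconj : Real.HolderConjugate a (a / (a - 1)) := by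
    rw [Real.holderConjugate_iff]
    constructor
    · exact ha1
    · field_simp
      ring
  have hHolder : ∀ w : Fin n → ZMod 2, ∑ v, pV v * pV (v + w) ^ b ≤ K := by
    intro w
    have h := Real.inner_le_Lp_mul_Lq_of_nonneg (s := Finset.univ) (f := pV)
      (g := fun v => pV (v + w) ^ b) hconj (fun v _ => hV0 v)
      (fun v _ => Real.rpow_nonneg (hV0 _) b)
    refine h.trans ?_
    have e2 : ∑ v : Fin n → ZMod 2, (pV (v + w) ^ b) ^ (a / (a - 1)) = K := by
      have hb2 : ∀ v : Fin n → ZMod 2, (pV (v + w) ^ b) ^ (a / (a - 1)) = pV (v + w) ^ a := by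
        intro v
        rw [← Real.rpow_mul (hV0 _)]
        congr 1
        rw [hb]; field_simp
      simp only [hb2]
      rw [hK]
      exact Equiv.sum_comp (Equiv.addRight w) (fun x => pV x ^ a)
    rw [e2, ← hK, ← Real.rpow_add hK0, one_div, one_div, hconj.inv_add_inv_eq_one,
      Real.rpow_one]
  -- exact computation of the near-part total
  have key1 : (∑ u, ∑ A ∈ Hs, c * E * ∑ v, (if A.mulVec v = u then pV v else 0) *
        (∑ w, if wt w ≤ t ∨ n - wt w ≤ t then pV (v + w) ^ b else 0))
      = E * ∑ w, (if wt w ≤ t ∨ n - wt w ≤ t then ∑ v, pV v * pV (v + w) ^ b else 0) := by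
    rw [Finset.sum_comm]
    have hinner : ∀ A : Matrix (Fin m) (Fin n) (ZMod 2),
        (∑ u, c * E * ∑ v, (if A.mulVec v = u then pV v else 0) *
          (∑ w, if wt w ≤ t ∨ n - wt w ≤ t then pV (v + w) ^ b else 0))
        = c * (E * ∑ w, (if wt w ≤ t ∨ n - wt w ≤ t then ∑ v, pV v * pV (v + w) ^ b else 0)) := by
      intro A
      have inner : (∑ u, ∑ v, (if A.mulVec v = u then pV v else 0) *
            (∑ w, if wt w ≤ t ∨ n - wt w ≤ t then pV (v + w) ^ b else 0))
          = ∑ w, (if wt w ≤ t ∨ n - wt w ≤ t then ∑ v, pV v * pV (v + w) ^ b else 0) := by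
        calc (∑ u, ∑ v, (if A.mulVec v = u then pV v else 0) *
              (∑ w, if wt w ≤ t ∨ n - wt w ≤ t then pV (v + w) ^ b else 0))
            = ∑ v, ∑ u, (if A.mulVec v = u then pV v else 0) *
              (∑ w, if wt w ≤ t ∨ n - wt w ≤ t then pV (v + w) ^ b else 0) :=
              Finset.sum_comm
          _ = ∑ v, pV v * (∑ w, if wt w ≤ t ∨ n - wt w ≤ t then pV (v + w) ^ b else 0) := by
              refine Finset.sum_congr rfl fun v _ => ?_
              simp only [ite_mul, zero_mul]
              rw [Finset.sum_ite_eq]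
              simp
          _ = ∑ v, ∑ w, (if wt w ≤ t ∨ n - wt w ≤ t then pV v * pV (v + w) ^ b else 0) := by
              refine Finset.sum_congr rfl fun v _ => ?_
              rw [Finset.mul_sum]
              refine Finset.sum_congr rfl fun w _ => ?_
              by_cases hw : wt w ≤ t ∨ n - wt w ≤ t <;> simp [hw]
          _ = ∑ w, ∑ v, (if wt w ≤ t ∨ n - wt w ≤ t then pV v * pV (v + w) ^ b else 0) :=
              Finset.sum_comm
          _ = ∑ w, (if wt w ≤ t ∨ n - wt w ≤ t then ∑ v, pV v * pV (v + w) ^ b else 0) := by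
              refine Finset.sum_congr rfl fun w _ => ?_
              by_cases hw : wt w ≤ t ∨ n - wt w ≤ t <;> simp [hw]
      calc (∑ u, c * E * ∑ v, (if A.mulVec v = u then pV v else 0) *
            (∑ w, if wt w ≤ t ∨ n - wt w ≤ t then pV (v + w) ^ b else 0))
          = c * E * ∑ u, ∑ v, (if A.mulVec v = u then pV v else 0) *
            (∑ w, if wt w ≤ t ∨ n - wt w ≤ t then pV (v + w) ^ b else 0) := by
            rw [Finset.mul_sum]
        _ = c * (E * ∑ w, (if wt w ≤ t ∨ n - wt w ≤ t then
              ∑ v, pV v * pV (v + w) ^ b else 0)) := by rw [inner]; ring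
    calc (∑ A ∈ Hs, ∑ u, c * E * ∑ v, (if A.mulVec v = u then pV v else 0) *
          (∑ w, if wt w ≤ t ∨ n - wt w ≤ t then pV (v + w) ^ b else 0))
        = ∑ A ∈ Hs, c * (E * ∑ w, (if wt w ≤ t ∨ n - wt w ≤ t then
            ∑ v, pV v * pV (v + w) ^ b else 0)) :=
          Finset.sum_congr rfl fun A _ => hinner A
      _ = E * ∑ w, (if wt w ≤ t ∨ n - wt w ≤ t then ∑ v, pV v * pV (v + w) ^ b else 0) := by
          rw [Finset.sum_const, nsmul_eq_mul, hc]
          field_simp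
  have hT1le : T1 ≤ 2 * ν * (E * K) := by
    rw [hT1]
    calc (∑ u, ∑ A ∈ Hs, c * E * ∑ v, (if A.mulVec v = u then pV v else 0) * gf A u v ^ b)
        ≤ ∑ u, ∑ A ∈ Hs, c * E * ∑ v, (if A.mulVec v = u then pV v else 0) *
            (∑ w, if wt w ≤ t ∨ n - wt w ≤ t then pV (v + w) ^ b else 0) := by
          refine Finset.sum_le_sum fun u _ => Finset.sum_le_sum fun A _ => ?_
          refine mul_le_mul_of_nonneg_left (Finset.sum_le_sum fun v _ => ?_)
            (mul_nonneg hc0.le hE0.le)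
          refine mul_le_mul_of_nonneg_left (hgb A u v) ?_
          split <;> [exact hV0 v; exact le_rfl]
      _ = E * ∑ w, (if wt w ≤ t ∨ n - wt w ≤ t then ∑ v, pV v * pV (v + w) ^ b else 0) := key1
      _ ≤ E * ∑ w : Fin n → ZMod 2, (if wt w ≤ t ∨ n - wt w ≤ t then K else 0) := by
          refine mul_le_mul_of_nonneg_left (Finset.sum_le_sum fun w _ => ?_) hE0.le
          by_cases hw : wt w ≤ t ∨ n - wt w ≤ t
          · rw [if_pos hw, if_pos hw]; exact hHolder w
          · rw [if_neg hw, if_neg hw]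
      _ ≤ E * (2 * ν * K) := by
          refine mul_le_mul_of_nonneg_left ?_ hE0.le
          rw [← Finset.sum_filter, Finset.sum_const, nsmul_eq_mul]
          have hcard2 := card_Gamma_le n t
          rw [← hν] at hcard2
          calc ((Finset.univ.filter fun w : Fin n → ZMod 2 =>
                  wt w ≤ t ∨ n - wt w ≤ t).card : ℝ) * K
              ≤ ((2 * ν : ℕ) : ℝ) * K := by
                refine mul_le_mul_of_nonneg_right ?_ hK0.le
                exact_mod_cast hcard2
            _ = 2 * ν * K := by push_cast; ring
      _ = 2 * ν * (E * K) := by ring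
  -- characteristic-two fact for image vectors
  have hnegm : ∀ x : Fin m → ZMod 2, -x = x := by
    intro x; funext j
    exact CharTwo.neg_eq (x j)
  have hvvm : ∀ x : Fin m → ZMod 2, x + x = 0 := by
    intro x; funext j
    exact CharTwo.add_self_eq_zero (x j)
  have hAiff : ∀ (A : Matrix (Fin m) (Fin n) (ZMod 2)) (v v' : Fin n → ZMod 2),
      (A.mulVec v' = A.mulVec v) ↔ A.mulVec (v + v') = 0 := by
    intro A v v'
    rw [Matrix.mulVec_add]
    constructor
    · intro h
      rw [h]
      exact hvvm _
    · intro h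
      rw [add_eq_zero_iff_eq_neg, hnegm] at h
      exact h.symm
  -- weights and values for the Jensen step
  set wgt : Matrix (Fin m) (Fin n) (ZMod 2) × (Fin m → ZMod 2) × (Fin n → ZMod 2) → ℝ :=
    fun x => (if x.1 ∈ Hs then c else 0) *
      (if x.1.mulVec x.2.2 = x.2.1 then pV x.2.2 else 0) with hwgt
  set zz : Matrix (Fin m) (Fin n) (ZMod 2) × (Fin m → ZMod 2) × (Fin n → ZMod 2) → ℝ :=
    fun x => (2 ^ m : ℝ) * hf x.1 x.2.1 x.2.2 with hzz
  have hwgt' : ∀ A u v, wgt (A, u, v) = (if A ∈ Hs then c else 0) *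
      (if A.mulVec v = u then pV v else 0) := fun A u v => rfl
  have hzz' : ∀ A u v, zz (A, u, v) = (2 ^ m : ℝ) * hf A u v := fun A u v => rfl
  have hwgt0 : ∀ x, 0 ≤ wgt x := by
    rintro ⟨A, u, v⟩
    rw [hwgt']
    refine mul_nonneg ?_ ?_
    · split <;> [exact hc0.le; exact le_rfl]
    · split <;> [exact hV0 v; exact le_rfl]
  have hzz0 : ∀ x, 0 ≤ zz x := by
    rintro ⟨A, u, v⟩
    rw [hzz']
    exact mul_nonneg h2m.le (hh0 _ _ _)
  have hterm2 : ∀ A u v, wgt (A, u, v) * zz (A, u, v) ^ b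
      = (if A ∈ Hs then c * E * ((if A.mulVec v = u then pV v else 0) * hf A u v ^ b)
          else 0) := by
    intro A u v
    rw [hwgt', hzz', Real.mul_rpow h2m.le (hh0 A u v), ← hE]
    by_cases hA : A ∈ Hs
    · rw [if_pos hA, if_pos hA]; ring
    · rw [if_neg hA, if_neg hA, zero_mul, zero_mul]
  have hT2eq : T2 = ∑ x, wgt x * zz x ^ b := by
    have hrhs : (∑ x, wgt x * zz x ^ b)
        = ∑ A ∈ Hs, ∑ u, ∑ v, c * E *
            ((if A.mulVec v = u then pV v else 0) * hf A u v ^ b) := by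
      rw [Fintype.sum_prod_type]
      simp only [Fintype.sum_prod_type, hterm2]
      have pull : ∀ A : Matrix (Fin m) (Fin n) (ZMod 2),
          (∑ u, ∑ v, (if A ∈ Hs then c * E *
              ((if A.mulVec v = u then pV v else 0) * hf A u v ^ b) else 0))
          = if A ∈ Hs then (∑ u, ∑ v, c * E *
              ((if A.mulVec v = u then pV v else 0) * hf A u v ^ b)) else 0 := by
        intro A
        by_cases hA : A ∈ Hs <;> simp [hA]
      simp only [pull]
      rw [Finset.sum_ite_mem, Finset.univ_inter]
    rw [hT2, hrhs, Finset.sum_comm]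
    refine Finset.sum_congr rfl fun A _ => Finset.sum_congr rfl fun u _ => ?_
    rw [Finset.mul_sum]
  have hwgt1 : ∑ x, wgt x = 1 := by
    rw [Fintype.sum_prod_type]
    simp only [Fintype.sum_prod_type, hwgt']
    have h1 : ∀ A : Matrix (Fin m) (Fin n) (ZMod 2),
        (∑ u, ∑ v, (if A ∈ Hs then c else 0) * (if A.mulVec v = u then pV v else 0))
        = (if A ∈ Hs then c else 0) := by
      intro A
      rw [Finset.sum_comm]
      have h2 : ∀ v : Fin n → ZMod 2,
          (∑ u, (if A ∈ Hs then c else 0) * (if A.mulVec v = u then pV v else 0))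
          = (if A ∈ Hs then c else 0) * pV v := by
        intro v
        simp only [mul_ite, mul_zero]
        rw [Finset.sum_ite_eq]
        simp
      simp only [h2, ← Finset.mul_sum, hV1, mul_one]
    rw [Finset.sum_congr rfl fun A _ => h1 A]
    rw [Finset.sum_ite_mem, Finset.univ_inter, Finset.sum_const, nsmul_eq_mul, hc,
      mul_one_div, div_self hcard.ne']
  have hJensen : T2 ≤ (∑ x, wgt x * zz x) ^ b := by
    rw [hT2eq]
    exact jensen_rpow' hwgt0 (le_of_eq hwgt1) hzz0 hb0 hb1
  -- compute the mean of the far part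
  have s2 : ∀ (A : Matrix (Fin m) (Fin n) (ZMod 2)) (v : Fin n → ZMod 2),
      hf A (A.mulVec v) v = ∑ w, if ¬(wt w ≤ t ∨ n - wt w ≤ t) then
        (if A.mulVec w = 0 then pV (v + w) else 0) else 0 := by
    intro A v
    rw [hhf']
    rw [← Equiv.sum_comp (Equiv.addLeft v) (fun w => if ¬(wt w ≤ t ∨ n - wt w ≤ t) then
      (if A.mulVec w = 0 then pV (v + w) else 0) else 0)]
    refine Finset.sum_congr rfl fun v' _ => ?_
    simp only [Equiv.coe_addLeft]
    rw [hcan]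
    change _ = (if ¬(wt (v + v') ≤ t ∨ n - wt (v + v') ≤ t) then
      (if A.mulVec (v + v') = 0 then pV v' else 0) else 0)
    by_cases hPw : wt (v + v') ≤ t ∨ n - wt (v + v') ≤ t
    · rw [if_neg (not_not_intro hPw), if_neg (not_not_intro hPw)]
    · rw [if_pos hPw, if_pos hPw]
      exact if_congr (hAiff A v v') rfl rfl
  have s1 : ∀ A : Matrix (Fin m) (Fin n) (ZMod 2),
      (∑ u, ∑ v, ((if A ∈ Hs then c else 0) * (if A.mulVec v = u then pV v else 0)) *
        ((2 ^ m : ℝ) * hf A u v))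
      = (if A ∈ Hs then (2 ^ m : ℝ) * c * ∑ v, pV v * hf A (A.mulVec v) v else 0) := by
    intro A
    by_cases hA : A ∈ Hs
    · simp only [if_pos hA]
      rw [Finset.sum_comm]
      have h2 : ∀ v : Fin n → ZMod 2,
          (∑ u, (c * (if A.mulVec v = u then pV v else 0)) * ((2 ^ m : ℝ) * hf A u v))
          = (2 ^ m : ℝ) * c * (pV v * hf A (A.mulVec v) v) := by
        intro v
        have hterm3 : ∀ u, (c * (if A.mulVec v = u then pV v else 0)) *
            ((2 ^ m : ℝ) * hf A u v)
            = (if A.mulVec v = u then (2 ^ m : ℝ) * c * (pV v * hf A u v) else 0) := by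
          intro u
          by_cases hu : A.mulVec v = u <;> simp [hu] <;> ring
        simp only [hterm3]
        rw [Finset.sum_ite_eq]
        simp
      simp only [h2]
      rw [← Finset.mul_sum]
    · simp [hA]
  have s3 : ∀ A : Matrix (Fin m) (Fin n) (ZMod 2),
      (∑ v, pV v * hf A (A.mulVec v) v)
      = ∑ w, (if ¬(wt w ≤ t ∨ n - wt w ≤ t) then
          (if A.mulVec w = 0 then ∑ v, pV v * pV (v + w) else 0) else 0) := by
    intro A
    simp only [s2]
    calc (∑ v, pV v * ∑ w, if ¬(wt w ≤ t ∨ n - wt w ≤ t) then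
            (if A.mulVec w = 0 then pV (v + w) else 0) else 0)
        = ∑ v, ∑ w, pV v * (if ¬(wt w ≤ t ∨ n - wt w ≤ t) then
            (if A.mulVec w = 0 then pV (v + w) else 0) else 0) := by
          simp only [Finset.mul_sum]
      _ = ∑ w, ∑ v, pV v * (if ¬(wt w ≤ t ∨ n - wt w ≤ t) then
            (if A.mulVec w = 0 then pV (v + w) else 0) else 0) := Finset.sum_comm
      _ = _ := by
          refine Finset.sum_congr rfl fun w _ => ?_
          by_cases hw : wt w ≤ t ∨ n - wt w ≤ t
          · simp [hw]
          · by_cases hA0 : A.mulVec w = 0 <;> simp [hw, hA0]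
  have hwz : (∑ x, wgt x * zz x)
      = (2 ^ m : ℝ) * ∑ v ∈ Finset.univ.filter
          (fun v : Fin n → ZMod 2 => ¬(wt v ≤ t ∨ n - wt v ≤ t)),
        ((Hs.filter fun A => A.mulVec v = 0).card / (Hs.card : ℝ))
          * ∑ v', pV v' * pV (v + v') := by
    rw [Fintype.sum_prod_type]
    simp only [Fintype.sum_prod_type, hwgt', hzz']
    simp only [s1, s3]
    rw [Finset.sum_ite_mem, Finset.univ_inter]
    have h4 : ∀ w : Fin n → ZMod 2,
        (∑ A ∈ Hs, (2 ^ m : ℝ) * c * (if ¬(wt w ≤ t ∨ n - wt w ≤ t) then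
          (if A.mulVec w = 0 then ∑ v, pV v * pV (v + w) else 0) else 0))
        = if ¬(wt w ≤ t ∨ n - wt w ≤ t) then (2 ^ m : ℝ) *
            (((Hs.filter fun A => A.mulVec w = 0).card : ℝ) / (Hs.card : ℝ)
              * ∑ v, pV v * pV (v + w)) else 0 := by
      intro w
      by_cases hw : wt w ≤ t ∨ n - wt w ≤ t
      · rw [if_neg (not_not_intro hw)]
        refine Finset.sum_eq_zero fun A _ => ?_
        rw [if_neg (not_not_intro hw), mul_zero]
      · rw [if_pos hw]
        have h6 : ∀ A ∈ Hs, (2 ^ m : ℝ) * c * (if ¬(wt w ≤ t ∨ n - wt w ≤ t) then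
            (if A.mulVec w = 0 then ∑ v, pV v * pV (v + w) else 0) else 0)
            = (if A.mulVec w = 0 then
                (2 ^ m : ℝ) * c * (∑ v, pV v * pV (v + w)) else 0) := by
          intro A _
          rw [if_pos hw]
          by_cases h0 : A.mulVec w = 0 <;> simp [h0]
        rw [Finset.sum_congr rfl h6]
        rw [← Finset.sum_filter, Finset.sum_const, nsmul_eq_mul, hc, one_div,
          div_eq_mul_inv]
        ring
    calc (∑ A ∈ Hs, (2 ^ m : ℝ) * c * ∑ w, (if ¬(wt w ≤ t ∨ n - wt w ≤ t) then
            (if A.mulVec w = 0 then ∑ v, pV v * pV (v + w) else 0) else 0))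
        = ∑ A ∈ Hs, ∑ w, (2 ^ m : ℝ) * c * (if ¬(wt w ≤ t ∨ n - wt w ≤ t) then
            (if A.mulVec w = 0 then ∑ v, pV v * pV (v + w) else 0) else 0) := by
          refine Finset.sum_congr rfl fun A _ => ?_
          rw [Finset.mul_sum]
      _ = ∑ w, ∑ A ∈ Hs, (2 ^ m : ℝ) * c * (if ¬(wt w ≤ t ∨ n - wt w ≤ t) then
            (if A.mulVec w = 0 then ∑ v, pV v * pV (v + w) else 0) else 0) :=
          Finset.sum_comm
      _ = ∑ w, (if ¬(wt w ≤ t ∨ n - wt w ≤ t) then (2 ^ m : ℝ) *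
            (((Hs.filter fun A => A.mulVec w = 0).card : ℝ) / (Hs.card : ℝ)
              * ∑ v, pV v * pV (v + w)) else 0) :=
          Finset.sum_congr rfl fun w _ => h4 w
      _ = ∑ w ∈ Finset.univ.filter (fun w : Fin n → ZMod 2 =>
              ¬(wt w ≤ t ∨ n - wt w ≤ t)),
            (2 ^ m : ℝ) * (((Hs.filter fun A => A.mulVec w = 0).card : ℝ) / (Hs.card : ℝ)
              * ∑ v, pV v * pV (v + w)) := (Finset.sum_filter _ _).symm
      _ = _ := by
          rw [Finset.mul_sum]
          refine Finset.sum_congr rfl fun w hw => ?_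
          congr 2
          refine Finset.sum_congr rfl fun v _ => ?_
          rw [add_comm v w]
  have hT2le : T2 ≤ ((2 ^ m : ℝ) * ∑ v ∈ Finset.univ.filter
        (fun v : Fin n → ZMod 2 => ¬(wt v ≤ t ∨ n - wt v ≤ t)),
      ((Hs.filter fun A => A.mulVec v = 0).card / (Hs.card : ℝ))
        * ∑ v', pV v' * pV (v + v')) ^ b := by
    refine hJensen.trans ?_
    rw [hwz]
  calc (2 : ℝ) ^ (b * Dα) = S := by rw [hb]; exact hLHS
    _ ≤ T1 + T2 := hS_le
    _ ≤ 2 * ν * (E * K) + ((2 ^ m : ℝ) * ∑ v ∈ Finset.univ.filter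
          (fun v : Fin n → ZMod 2 => ¬(wt v ≤ t ∨ n - wt v ≤ t)),
        ((Hs.filter fun A => A.mulVec v = 0).card / (Hs.card : ℝ))
          * ∑ v', pV v' * pV (v + v')) ^ b := add_le_add hT1le hT2le
    _ = _ := by
        congr 1
        rw [hb]
        exact hRHS1.symm
end
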